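/- Let x be a random vector in R^k with density p_x, and let n be an independent Gaussian noise vector with mean zero and covariance Σ_n. Let x̃ = x + n with density p_x̃. Then E[x | x̃] = x̃ + Σ_n ∇ log p_x̃(x̃). -/

import Mathlib

open MeasureTheory Real

section TweedieAux

variable {E : Type*} [NormedAddCommGroup E] [InnerProductSpace ℝ E] [FiniteDimensional ℝ E]

/-- Coercivity of a positive quadratic form in finite dimension. -/
lemma tm_coercive (A : E →L[ℝ] E)
    (hpos : ∀ v : E, v ≠ 0 → 0 < (inner ℝ v (A v) : ℝ)) :
    ∃ ε > 0, ∀ v : E, ε * ‖v‖ ^ 2 ≤ (inner ℝ v (A v) : ℝ) := by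
  rcases isEmpty_or_nonempty (Metric.sphere (0 : E) 1) with he | hne
  · refine ⟨1, one_pos, fun v => ?_⟩
    have hv : v = 0 := by
      by_contra h
      exact he.elim ⟨‖v‖⁻¹ • v, by simp [norm_smul, inv_mul_cancel₀ (norm_ne_zero_iff.2 h)]⟩
    simp [hv]
  · have hc : IsCompact (Metric.sphere (0 : E) 1) := isCompact_sphere 0 1
    have hcont : Continuous fun v : E => (inner ℝ v (A v) : ℝ) :=
      continuous_inner.comp (continuous_id.prodMk A.continuous)
    obtain ⟨v₀, hv₀, hmin⟩ := hc.exists_isMinOn (Set.nonempty_coe_sort.mp hne)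
      hcont.continuousOn
    have hv₀n : ‖v₀‖ = 1 := by simpa using hv₀
    have hv₀0 : v₀ ≠ 0 := by intro h; rw [h] at hv₀n; simp at hv₀n
    refine ⟨inner ℝ v₀ (A v₀), hpos v₀ hv₀0, fun v => ?_⟩
    rcases eq_or_ne v 0 with rfl | hv
    · simp
    · have hvn : ‖v‖ ≠ 0 := norm_ne_zero_iff.2 hv
      set u : E := ‖v‖⁻¹ • v with hu
      have hus : u ∈ Metric.sphere (0 : E) 1 := by
        simp [hu, norm_smul, inv_mul_cancel₀ hvn]
      have h1 : (inner ℝ v₀ (A v₀) : ℝ) ≤ inner ℝ u (A u) := hmin hus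
      have h2 : (inner ℝ u (A u) : ℝ) = ‖v‖⁻¹ ^ 2 * inner ℝ v (A v) := by
        simp only [hu, real_inner_smul_left, inner_smul_right, A.map_smul]
        ring
      have h3 : (inner ℝ v (A v) : ℝ) = ‖v‖ ^ 2 * inner ℝ u (A u) := by
        rw [h2]; field_simp
      rw [h3]
      calc (inner ℝ v₀ (A v₀) : ℝ) * ‖v‖ ^ 2 ≤ inner ℝ u (A u) * ‖v‖ ^ 2 := by
            apply mul_le_mul_of_nonneg_right h1 (by positivity)
        _ = ‖v‖ ^ 2 * inner ℝ u (A u) := by ring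

/-- Derivative of the Gaussian density. -/
lemma tm_hasFDerivAt_phi (c : ℝ) (AL : E →L[ℝ] E)
    (hsym : ∀ v w : E, (inner ℝ (AL v) w : ℝ) = inner ℝ v (AL w))
    (φ : E → ℝ)
    (hφ : ∀ v, φ v = c * Real.exp (-(inner ℝ v (AL v) : ℝ) / 2))
    (v : E) :
    HasFDerivAt φ ((-(φ v)) • (innerSL ℝ (AL v))) v := by
  have hq : HasFDerivAt (fun w : E => (inner ℝ w (AL w) : ℝ))
      ((2 : ℝ) • (innerSL ℝ (AL v))) v := by
    have h1 := (hasFDerivAt_id v).inner ℝ (AL.hasFDerivAt (x := v))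
    refine h1.congr_fderiv ?_
    ext w
    simp only [ContinuousLinearMap.smul_apply, innerSL_apply_apply, fderivInnerCLM_apply,
      ContinuousLinearMap.comp_apply, ContinuousLinearMap.prod_apply,
      ContinuousLinearMap.coe_id', id_eq, smul_eq_mul]
    rw [← hsym v w, real_inner_comm w (AL v)]
    ring
  have h3 : HasFDerivAt (fun w : E =>
      (-(1:ℝ)/2) * (inner ℝ w (AL w) : ℝ)) ((-(1:ℝ)/2) • ((2 : ℝ) • (innerSL ℝ (AL v)))) v :=
    hq.const_mul _
  have h4 := h3.exp.const_mul c
  have hfun : φ = fun w : E => c * Real.exp ((-(1:ℝ)/2) * (inner ℝ w (AL w) : ℝ)) := by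
    funext w
    rw [hφ w]
    congr 1
    ring
  rw [hfun]
  refine h4.congr_fderiv ?_
  ext w
  simp only [ContinuousLinearMap.smul_apply, innerSL_apply_apply, smul_eq_mul]
  ring_nf

end TweedieAux

set_option maxHeartbeats 1000000 in
/-- Tweedie-Miyasawa formula: E[x | x̃] = x̃ + Σ_n ∇ log p_x̃(x̃). -/
theorem tweedie_miyasawa (k : ℕ)
    (Sn : Matrix (Fin k) (Fin k) ℝ) (hS : Sn.PosDef)
    (px : EuclideanSpace ℝ (Fin k) → ℝ)
    (hpx_nonneg : ∀ x, 0 ≤ px x)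
    (hpx_cont : Continuous px)
    (hpx_prob : ∫ x, px x = 1)
    (φ : EuclideanSpace ℝ (Fin k) → ℝ)
    (hφ : ∀ v, φ v = (Real.sqrt ((2 * π) ^ k * Sn.det))⁻¹ *
      Real.exp (-(inner ℝ v (Matrix.toEuclideanLin Sn⁻¹ v) : ℝ) / 2))
    (pt : EuclideanSpace ℝ (Fin k) → ℝ)
    (hpt : ∀ y, pt y = ∫ x, φ (y - x) * px x)
    (y : EuclideanSpace ℝ (Fin k))
    (hpos : 0 < pt y)
    (hint : Integrable (fun x => (φ (y - x) * px x) • x)) :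
    (pt y)⁻¹ • (∫ x, (φ (y - x) * px x) • x)
      = y + Matrix.toEuclideanLin Sn (gradient (fun z => Real.log (pt z)) y) := by
  classical
  have hSi : (Sn⁻¹).PosDef := hS.inv
  set c : ℝ := (Real.sqrt ((2 * π) ^ k * Sn.det))⁻¹ with hc
  have hc0 : 0 ≤ c := inv_nonneg.2 (Real.sqrt_nonneg _)
  set AL : EuclideanSpace ℝ (Fin k) →L[ℝ] EuclideanSpace ℝ (Fin k) := LinearMap.toContinuousLinearMap (Matrix.toEuclideanLin Sn⁻¹) with hAL
  have hALapply : ∀ v : EuclideanSpace ℝ (Fin k), AL v = Matrix.toEuclideanLin Sn⁻¹ v := fun _ => rfl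
  -- bridging inner ℝ product and dot product
  have hinner : ∀ v : EuclideanSpace ℝ (Fin k), (inner ℝ v (AL v) : ℝ)
      = dotProduct (star (WithLp.equiv 2 (Fin k → ℝ) v))
        (Matrix.mulVec Sn⁻¹ (WithLp.equiv 2 (Fin k → ℝ) v)) := by
    intro v
    rw [hALapply, Matrix.toEuclideanLin_apply]
    simp only [PiLp.inner_apply, RCLike.inner_apply, conj_trivial, dotProduct,
      WithLp.equiv, Equiv.refl_apply, Pi.star_apply, star_trivial]
    exact Finset.sum_congr rfl fun i _ => mul_comm _ _
  have hqpos : ∀ v : EuclideanSpace ℝ (Fin k), v ≠ 0 → 0 < (inner ℝ v (AL v) : ℝ) := by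
    intro v hv
    rw [hinner]
    refine hSi.dotProduct_mulVec_pos ?_
    intro h
    exact hv ((WithLp.equiv 2 (Fin k → ℝ)).injective (by simpa using h))
  have hq0 : ∀ v : EuclideanSpace ℝ (Fin k), 0 ≤ (inner ℝ v (AL v) : ℝ) := by
    intro v
    rw [hinner]
    exact hSi.posSemidef.dotProduct_mulVec_nonneg _
  have hsym : ∀ v w : EuclideanSpace ℝ (Fin k), (inner ℝ (AL v) w : ℝ) = inner ℝ v (AL w) := by
    intro v w
    exact (Matrix.isHermitian_iff_isSymmetric.mp hSi.1) v w
  have hSinv : ∀ v : EuclideanSpace ℝ (Fin k), Matrix.toEuclideanLin Sn (AL v) = v := by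
    intro v
    rw [hALapply, Matrix.toEuclideanLin_apply, Matrix.toEuclideanLin_apply]
    simp [Matrix.mulVec_mulVec, Matrix.mul_nonsing_inv _ (isUnit_iff_ne_zero.2 hS.det_pos.ne')]
  -- coercivity
  obtain ⟨ε, hε, hco⟩ := tm_coercive AL hqpos
  -- φ facts
  have hφAL : ∀ v : EuclideanSpace ℝ (Fin k), φ v = c * Real.exp (-(inner ℝ v (AL v) : ℝ) / 2) := by
    intro v
    rw [hALapply v]
    exact hφ v
  have hqcont : Continuous fun v : EuclideanSpace ℝ (Fin k) => (inner ℝ v (AL v) : ℝ) :=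
    continuous_inner.comp (continuous_id.prodMk AL.continuous)
  have hφcont : Continuous φ := by
    have hfe : φ = fun v : EuclideanSpace ℝ (Fin k) => c * Real.exp (-(inner ℝ v (AL v) : ℝ) / 2) := funext hφAL
    rw [hfe]
    exact continuous_const.mul (Real.continuous_exp.comp ((hqcont.neg).div_const 2))
  have hφnonneg : ∀ v : EuclideanSpace ℝ (Fin k), 0 ≤ φ v := by
    intro v
    rw [hφAL v]
    positivity
  have hφle : ∀ v : EuclideanSpace ℝ (Fin k), φ v ≤ c := by
    intro v
    rw [hφAL v]
    have h1 : Real.exp (-(inner ℝ v (AL v) : ℝ) / 2) ≤ 1 := by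
      rw [← Real.exp_zero]
      apply Real.exp_le_exp.2
      have := hq0 v
      linarith
    nlinarith
  -- key bound : ‖v‖ * exp(-q v / 2) ≤ max 1 (2/ε)
  have hkey : ∀ v : EuclideanSpace ℝ (Fin k), ‖v‖ * Real.exp (-(inner ℝ v (AL v) : ℝ) / 2) ≤ max 1 (2 / ε) := by
    intro v
    rcases le_or_gt ‖v‖ 1 with h | h
    · have h1 : Real.exp (-(inner ℝ v (AL v) : ℝ) / 2) ≤ 1 := by
        rw [← Real.exp_zero]
        apply Real.exp_le_exp.2
        have := hq0 v
        linarith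
      have : ‖v‖ * Real.exp (-(inner ℝ v (AL v) : ℝ) / 2) ≤ 1 :=
        mul_le_one₀ h (Real.exp_nonneg _) h1
      exact this.trans (le_max_left _ _)
    · have hq2 : ε * ‖v‖ ^ 2 / 2 ≤ Real.exp ((inner ℝ v (AL v) : ℝ) / 2) := by
        have h1 := hco v
        have h2 := Real.add_one_le_exp ((inner ℝ v (AL v) : ℝ) / 2)
        linarith
      have hpos2 : 0 < ε * ‖v‖ ^ 2 / 2 := by positivity
      have h3 : Real.exp (-(inner ℝ v (AL v) : ℝ) / 2) ≤ (ε * ‖v‖ ^ 2 / 2)⁻¹ := by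
        rw [neg_div, Real.exp_neg]
        exact inv_anti₀ hpos2 hq2
      have h4 : ‖v‖ * Real.exp (-(inner ℝ v (AL v) : ℝ) / 2) ≤ ‖v‖ * (ε * ‖v‖ ^ 2 / 2)⁻¹ :=
        mul_le_mul_of_nonneg_left h3 (norm_nonneg _)
      have h5 : ‖v‖ * (ε * ‖v‖ ^ 2 / 2)⁻¹ ≤ 2 / ε := by
        have hv0 : (0:ℝ) < ‖v‖ := lt_trans one_pos h
        have he : ‖v‖ * (ε * ‖v‖ ^ 2 / 2)⁻¹ = 2 / (ε * ‖v‖) := by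
          field_simp
        rw [he, div_le_div_iff₀ (by positivity) hε]
        nlinarith
      exact (h4.trans h5).trans (le_max_right _ _)
  -- integrability of px
  have hpxint : Integrable px := by
    by_contra h
    rw [integral_undef h] at hpx_prob
    exact one_ne_zero hpx_prob.symm
  -- the derivative candidate
  set F' : EuclideanSpace ℝ (Fin k) → EuclideanSpace ℝ (Fin k) → (EuclideanSpace ℝ (Fin k) →L[ℝ] ℝ) :=
    fun z x => (px x * -(φ (z - x))) • innerSL ℝ (AL (z - x)) with hF'
  set C : ℝ := ‖AL‖ * (c * max 1 (2 / ε)) with hC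
  have hφnorm : ∀ v : EuclideanSpace ℝ (Fin k), φ v * ‖AL v‖ ≤ ‖AL‖ * (c * max 1 (2 / ε)) := by
    intro v
    have h1 : ‖AL v‖ ≤ ‖AL‖ * ‖v‖ := AL.le_opNorm v
    have h2 : φ v * ‖v‖ ≤ c * max 1 (2 / ε) := by
      rw [hφAL v]
      have := hkey v
      nlinarith [Real.exp_nonneg (-(inner ℝ v (AL v) : ℝ) / 2), norm_nonneg v]
    nlinarith [hφnonneg v, norm_nonneg (AL v), norm_nonneg v, (norm_nonneg AL : (0:ℝ) ≤ ‖AL‖),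
      Real.exp_nonneg (-(inner ℝ v (AL v) : ℝ) / 2), mul_nonneg hc0 (le_max_left 1 (2/ε) |>.trans' zero_le_one)]
  have hF'bound : ∀ z x : EuclideanSpace ℝ (Fin k), ‖F' z x‖ ≤ C * px x := by
    intro z x
    rw [hF']
    simp only
    rw [norm_smul (px x * -(φ (z - x))) ((innerSL ℝ) (AL (z - x))), innerSL_apply_norm]
    have h1 : ‖px x * -(φ (z - x))‖ = px x * φ (z - x) := by
      rw [norm_mul, norm_neg, Real.norm_eq_abs, Real.norm_eq_abs,
        abs_of_nonneg (hpx_nonneg x), abs_of_nonneg (hφnonneg _)]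
    rw [h1, hC]
    have := hφnorm (z - x)
    nlinarith [hpx_nonneg x]
  have hbound_int : Integrable (fun x => C * px x) := hpxint.const_mul C
  -- integrability of the integrand of pt
  have Ia : Integrable (fun x : EuclideanSpace ℝ (Fin k) => φ (y - x) * px x) := by
    apply Integrable.mono' (hpxint.const_mul c)
    · exact ((hφcont.comp (continuous_const.sub continuous_id)).mul hpx_cont).aestronglyMeasurable
    · filter_upwards with x
      rw [Real.norm_eq_abs, abs_of_nonneg (mul_nonneg (hφnonneg _) (hpx_nonneg x))]
      exact mul_le_mul_of_nonneg_right (hφle _) (hpx_nonneg x)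
  -- continuity of F' y
  have hALcont : Continuous fun x : EuclideanSpace ℝ (Fin k) => AL (y - x) :=
    AL.continuous.comp (continuous_const.sub continuous_id)
  have hF'cont : Continuous fun x : EuclideanSpace ℝ (Fin k) => F' y x := by
    rw [hF']
    exact (hpx_cont.mul ((hφcont.comp (continuous_const.sub continuous_id)).neg)).smul
      ((innerSL ℝ).continuous.comp hALcont)
  have IF' : Integrable (fun x : EuclideanSpace ℝ (Fin k) => F' y x) := by
    apply Integrable.mono' hbound_int hF'cont.aestronglyMeasurable
    filter_upwards with x
    exact hF'bound y x
  -- integrability of the gradient integrand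
  have Ib : Integrable (fun x : EuclideanSpace ℝ (Fin k) => (px x * -(φ (y - x))) • (AL (y - x))) := by
    apply Integrable.mono' hbound_int
    · exact ((hpx_cont.mul ((hφcont.comp (continuous_const.sub continuous_id)).neg)).smul
        hALcont).aestronglyMeasurable
    · filter_upwards with x
      rw [norm_smul]
      have h1 : ‖px x * -(φ (y - x))‖ = px x * φ (y - x) := by
        rw [norm_mul, norm_neg, Real.norm_eq_abs, Real.norm_eq_abs,
          abs_of_nonneg (hpx_nonneg x), abs_of_nonneg (hφnonneg _)]
      rw [h1, hC]
      have := hφnorm (y - x)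
      nlinarith [hpx_nonneg x]
  -- differentiation under the integral sign
  have hdiff : ∀ (x : EuclideanSpace ℝ (Fin k)), ∀ z ∈ Metric.ball y 1,
      HasFDerivAt (fun z => φ (z - x) * px x) (F' z x) z := by
    intro x z _
    have hd1 := tm_hasFDerivAt_phi c AL hsym φ hφAL (z - x)
    have hd2 : HasFDerivAt (fun z : EuclideanSpace ℝ (Fin k) => φ (z - x))
        ((-(φ (z - x))) • innerSL ℝ (AL (z - x))) z := by
      have hsub : HasFDerivAt (fun w : EuclideanSpace ℝ (Fin k) => w - x) (ContinuousLinearMap.id ℝ (EuclideanSpace ℝ (Fin k))) z := by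
        simpa using (hasFDerivAt_id z).sub_const x
      have := hd1.comp z hsub
      rw [ContinuousLinearMap.comp_id] at this
      exact this
    have := hd2.mul_const (px x)
    have hF'eq : F' z x = px x • -φ (z - x) • innerSL ℝ (AL (z - x)) := by
      rw [hF']
      simp only
      rw [smul_smul]
    rw [hF'eq]
    exact this
  have hDkey : HasFDerivAt (fun z => ∫ x, φ (z - x) * px x) (∫ x, F' y x) y := by
    apply hasFDerivAt_integral_of_dominated_of_fderiv_le (bound := fun x => C * px x)
      (s := Metric.ball y 1) (Metric.ball_mem_nhds y one_pos)
    · filter_upwards with z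
      exact ((hφcont.comp (continuous_const.sub continuous_id)).mul
        hpx_cont).aestronglyMeasurable
    · exact Ia
    · exact hF'cont.aestronglyMeasurable
    · filter_upwards with x
      intro z _
      exact hF'bound z x
    · exact hbound_int
    · filter_upwards with x
      intro z hz
      exact hdiff x z hz
  have hpt_eq : pt = fun z => ∫ x, φ (z - x) * px x := funext hpt
  have hD : HasFDerivAt pt (∫ x, F' y x) y := by rw [hpt_eq]; exact hDkey
  -- identify the derivative with the gradient vector G
  set G : EuclideanSpace ℝ (Fin k) := ∫ x, (px x * -(φ (y - x))) • (AL (y - x)) with hG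
  have hDG : (∫ x, F' y x) = (InnerProductSpace.toDual ℝ (EuclideanSpace ℝ (Fin k))) G := by
    apply ContinuousLinearMap.ext
    intro w
    rw [ContinuousLinearMap.integral_apply IF']
    rw [InnerProductSpace.toDual_apply_apply, real_inner_comm w G, ← integral_inner Ib]
    congr 1
    funext x
    rw [hF']
    simp only [ContinuousLinearMap.smul_apply, innerSL_apply_apply, smul_eq_mul]
    rw [real_inner_smul_right, real_inner_comm]
  have hD' : HasFDerivAt pt ((InnerProductSpace.toDual ℝ (EuclideanSpace ℝ (Fin k))) G) y := hDG ▸ hD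
  have hlogD : HasFDerivAt (fun z => Real.log (pt z))
      ((InnerProductSpace.toDual ℝ (EuclideanSpace ℝ (Fin k))) ((pt y)⁻¹ • G)) y := by
    have := hD'.log hpos.ne'
    rwa [← _root_.map_smul] at this
  have hgradlog : HasGradientAt (fun z => Real.log (pt z)) ((pt y)⁻¹ • G) y :=
    hasGradientAt_iff_hasFDerivAt.mpr hlogD
  rw [hgradlog.gradient]
  -- apply Sn and compute
  set SnL : EuclideanSpace ℝ (Fin k) →L[ℝ] EuclideanSpace ℝ (Fin k) := LinearMap.toContinuousLinearMap (Matrix.toEuclideanLin Sn) with hSnL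
  have hSnLapply : ∀ v : EuclideanSpace ℝ (Fin k), SnL v = Matrix.toEuclideanLin Sn v := fun _ => rfl
  have hSnG : Matrix.toEuclideanLin Sn ((pt y)⁻¹ • G) = (pt y)⁻¹ • SnL G := by
    rw [← hSnLapply, _root_.map_smul]
  have hSnLG : SnL G = (∫ x, (φ (y - x) * px x) • x) - (pt y) • y := by
    rw [hG, ← ContinuousLinearMap.integral_comp_comm SnL Ib]
    have heq : ∀ x : EuclideanSpace ℝ (Fin k), SnL ((px x * -(φ (y - x))) • (AL (y - x)))
        = (φ (y - x) * px x) • x - (φ (y - x) * px x) • y := by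
      intro x
      rw [_root_.map_smul, hSnLapply, hSinv]
      have h1 : px x * -(φ (y - x)) = -(φ (y - x) * px x) := by ring
      rw [h1, neg_smul, smul_sub]
      abel
    rw [integral_congr_ae (Filter.Eventually.of_forall heq)]
    rw [integral_sub hint (Ia.smul_const y), integral_smul_const, ← hpt y]
  rw [hSnG, hSnLG]
  rw [smul_sub, smul_smul, inv_mul_cancel₀ hpos.ne', one_smul]
  abel
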